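/- arXiv:1604.04947 — 4 statements merged into one kernel-verified Lean document; each statement's English description precedes it below -/
import Mathlib

section
/- For every α ∈ k, n ∈ ℕ, the operators on sequences satisfy (L − α) ∘ Dⁿ − Dⁿ ∘ (L − α) = D^(n−1), where L is the left shift, Dⁿ is the adjoint of the n-th divided derivative, and D^(−1) = 0. -/
/-- `(L − α) ∘ Dⁿ − Dⁿ ∘ (L − α) = D^(n−1)` on sequences, where `L` is the
left shift, `Dⁿ(s)ᵢ = C(i,n) • s_{i−n}`, and `D^(−1) = 0`. -/
theorem stmt_9 (k M : Type*) [CommRing k] [AddCommGroup M] [Module k M]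
    (α : k) (n : ℕ) (s : ℕ → M)
    (A : (ℕ → M) → (ℕ → M)) (hA : ∀ (t : ℕ → M) (i : ℕ), A t i = t (i + 1) - α • t i)
    (D : ℕ → (ℕ → M) → (ℕ → M))
    (hD : ∀ (m : ℕ) (t : ℕ → M) (i : ℕ), D m t i = Nat.choose i m • t (i - m)) :
    A (D n s) - D n (A s) = if n = 0 then 0 else D (n - 1) s := by
  funext i
  simp only [Pi.sub_apply, hA, hD]
  rcases n with _ | m
  · simp
  · simp only [Nat.succ_ne_zero, if_false, Nat.succ_sub_one]
    have hp : (i + 1).choose (m + 1) = i.choose (m + 1) + i.choose m := by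
      rw [Nat.choose_succ_succ, Nat.add_comm]
    have hidx : i + 1 - (m + 1) = i - m := Nat.succ_sub_succ i m
    rcases le_or_gt (m + 1) i with h | h
    · have : i - (m + 1) + 1 = i - m := by omega
      rw [hp, hidx, this, add_smul, smul_sub, hD, smul_comm α]
      abel
    · have h1 : i.choose (m + 1) = 0 := Nat.choose_eq_zero_of_lt h
      rw [hp, hidx, h1, hD]
      simp
end

section
/- Let α ∈ k, n ∈ ℕ, and s(α,n) = Dⁿ(s(α)) where s(α)ᵢ = αⁱ. If a ≤ n, then (L − α)^a (s(α,n)) = s(α, n−a). -/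
/-- If `a ≤ n` then `(L − α)^a (s(α,n)) = s(α, n−a)`, where
`s(α,n)ᵢ = C(i,n)·α^(i−n)` and `L` is the left shift. -/
theorem stmt_11 (k : Type*) [CommRing k] [IsDomain k] (α : k) (n a : ℕ) (h : a ≤ n)
    (T : (ℕ → k) → (ℕ → k)) (hT : ∀ (t : ℕ → k) (i : ℕ), T t i = t (i + 1) - α * t i)
    (s : ℕ → ℕ → k) (hs : ∀ (m i : ℕ), s m i = (Nat.choose i m : k) * α ^ (i - m)) :
    T^[a] (s n) = s (n - a) := by
  have key : ∀ m : ℕ, T (s (m + 1)) = s m := by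
    intro m
    funext i
    rw [hT, hs, hs, hs]
    rcases lt_or_ge i m with hlt | hle
    · rw [Nat.choose_eq_zero_of_lt hlt, Nat.choose_eq_zero_of_lt (by omega),
        Nat.choose_eq_zero_of_lt (by omega)]
      simp
    · rcases eq_or_lt_of_le hle with heq | hlt
      · subst heq
        rw [Nat.choose_self, Nat.choose_eq_zero_of_lt (Nat.lt_succ_self m), Nat.choose_self]
        simp
      · rw [Nat.choose_succ_succ]
        have e1 : i + 1 - (m + 1) = i - m := by omega
        have e2 : i - m = (i - (m + 1)) + 1 := by omega
        rw [e1, e2, pow_succ]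
        push_cast
        ring
  induction a with
  | zero => simp
  | succ a ih =>
      rw [Function.iterate_succ_apply', ih (by omega)]
      have : n - a = (n - (a + 1)) + 1 := by omega
      rw [this, key]
end

section
/- Let p(x) be a monic polynomial over an entire ring k and α ∈ k a root of p of multiplicity μ, i.e. p(x) = (x−α)^μ q(x) with q(α) ≠ 0. Then for each a with 0 ≤ a ≤ μ−1, the sequence s(α,a) with s(α,a)ᵢ = C(i,a)·α^(i−a) satisfies p(L)(s(α,a)) = 0, where L is the left shift on sequences in k. -/
/-- The left shift operator on sequences, as a `k`-linear endomorphism. -/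
def shiftOp (k : Type*) [CommRing k] : Module.End k (ℕ → k) where
  toFun s := fun i => s (i + 1)
  map_add' _ _ := rfl
  map_smul' _ _ := rfl

lemma shiftOp_apply {k : Type*} [CommRing k] (s : ℕ → k) (i : ℕ) :
    shiftOp k s i = s (i + 1) := rfl

lemma key_lemma (k : Type*) [CommRing k] (α : k) (a : ℕ) :
    ((shiftOp k - algebraMap k (Module.End k (ℕ → k)) α) ^ (a + 1))
      (fun i => (Nat.choose i a : k) * α ^ (i - a)) = 0 := by
  induction a with
  | zero =>
      funext i
      simp [shiftOp_apply, Module.algebraMap_end_apply, pow_succ, mul_comm]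
  | succ a ih =>
      have hstep : (shiftOp k - algebraMap k (Module.End k (ℕ → k)) α)
          (fun i => (Nat.choose i (a + 1) : k) * α ^ (i - (a + 1)))
          = fun i => (Nat.choose i a : k) * α ^ (i - a) := by
        funext i
        simp only [LinearMap.sub_apply, Pi.sub_apply, Module.algebraMap_end_apply,
          Pi.smul_apply, smul_eq_mul, shiftOp_apply]
        rcases le_or_gt (a + 1) i with h | h
        · have h1 : i + 1 - (a + 1) = i - a := by omega
          have h2 : i - (a + 1) = i - a - 1 := by omega
          have h3 : i - a - 1 + 1 = i - a := by omega
          have hc : (i + 1).choose (a + 1) = i.choose a + i.choose (a + 1) :=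
            Nat.choose_succ_succ i a
          rw [h1, h2, hc, ← h3, pow_succ]
          push_cast
          ring
        · have h1 : i.choose (a + 1) = 0 := Nat.choose_eq_zero_of_lt h
          have h2 : (i + 1).choose (a + 1) = i.choose a := by
            have hc : (i + 1).choose (a + 1) = i.choose a + i.choose (a + 1) :=
              Nat.choose_succ_succ i a
            rw [hc, h1, Nat.add_zero]
          have h3 : i + 1 - (a + 1) = i - a := by omega
          rw [h1, h2, h3]
          push_cast
          ring
      rw [pow_succ, Module.End.mul_apply, hstep, ih]

/-- If `α` is a root of the monic polynomial `p` of multiplicity `μ`, then for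
`0 ≤ a ≤ μ−1` the sequence `s(α,a)ᵢ = C(i,a)·α^(i−a)` lies in `ker p(L)`. -/
theorem stmt_18 (k : Type*) [CommRing k] [IsDomain k] (p q : Polynomial k)
    (hmonic : p.Monic) (α : k) (μ : ℕ) (hμ : 1 ≤ μ)
    (hfac : p = (Polynomial.X - Polynomial.C α) ^ μ * q)
    (hq : q.eval α ≠ 0) (a : ℕ) (ha : a ≤ μ - 1) :
    Polynomial.aeval (shiftOp k) p
      (fun i => (Nat.choose i a : k) * α ^ (i - a)) = 0 := by
  have hμa : a + 1 ≤ μ := by omega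
  have hp : p = ((Polynomial.X - Polynomial.C α) ^ (μ - (a + 1)) * q) *
      (Polynomial.X - Polynomial.C α) ^ (a + 1) := by
    have hsplit : (Polynomial.X - Polynomial.C α) ^ μ =
        (Polynomial.X - Polynomial.C α) ^ (μ - (a + 1)) *
          (Polynomial.X - Polynomial.C α) ^ (a + 1) := by
      rw [← pow_add]; congr 1; omega
    rw [hfac, hsplit]; ring
  rw [hp, map_mul, Module.End.mul_apply]
  have : (Polynomial.aeval (shiftOp k) ((Polynomial.X - Polynomial.C α) ^ (a + 1)))
      (fun i => (Nat.choose i a : k) * α ^ (i - a)) = 0 := by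
    rw [map_pow, map_sub, Polynomial.aeval_X, Polynomial.aeval_C]
    exact key_lemma k α a
  rw [this, map_zero]
end

section
/- Let p(x) be a monic polynomial over an entire ring k all of whose roots lie in k: p(x) = (x−α₁)^{μ₁}···(x−α_k)^{μ_k} with α₁,…,α_k distinct and μ_u ≥ 1. Then the sequences s(α_u, a) with s(α_u,a)ᵢ = C(i,a)·α_u^(i−a), for 1 ≤ u ≤ k and 0 ≤ a ≤ μ_u−1, are linearly independent over k and generate a free k-submodule S of ker p(L) of rank deg p; furthermore the quotient (ker p(L))/S is a torsion k-module, and if k is a field then S = ker p(L). -/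
/-- The sequence `s(α,a)ᵢ = C(i,a)·α^(i−a)`. -/
def divGeomSeq {k : Type*} [CommRing k] (α : k) (a : ℕ) : ℕ → k :=
  fun i => (Nat.choose i a : k) * α ^ (i - a)

open Polynomial

section Aux
variable {k : Type*} [CommRing k]

lemma shiftOp_pow_apply (m : ℕ) (s : ℕ → k) (n : ℕ) :
    ((shiftOp k ^ m) s) n = s (n + m) := by
  induction m generalizing s n with
  | zero => rfl
  | succ m ih =>
    rw [pow_succ, Module.End.mul_apply, ih]
    rfl

lemma aeval_shiftOp_apply (p : k[X]) (s : ℕ → k) (n : ℕ) :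
    ((aeval (shiftOp k) p) s) n
      = ∑ i ∈ Finset.range (p.natDegree + 1), p.coeff i * s (n + i) := by
  rw [Polynomial.aeval_eq_sum_range, LinearMap.sum_apply, Finset.sum_apply]
  simp [shiftOp_pow_apply]

lemma aeval_X_sub_C_apply (β : k) (s : ℕ → k) :
    (aeval (shiftOp k) (X - C β)) s = fun n => s (n + 1) - β * s n := by
  funext n
  simp [map_sub, Module.algebraMap_end_apply, shiftOp]

lemma aeval_X_sub_C_divGeomSeq_succ (α : k) (a : ℕ) :
    (aeval (shiftOp k) (X - C α)) (divGeomSeq α (a + 1)) = divGeomSeq α a := by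
  rw [aeval_X_sub_C_apply]
  funext i
  simp only [divGeomSeq]
  rcases lt_trichotomy i a with h | h | h
  · rw [Nat.choose_eq_zero_of_lt (by omega), Nat.choose_eq_zero_of_lt (by omega),
      Nat.choose_eq_zero_of_lt (by omega)]
    push_cast; ring
  · subst h
    rw [Nat.choose_self, Nat.choose_eq_zero_of_lt (by omega), Nat.choose_self]
    simp
  · rw [Nat.choose_succ_succ i a]
    have h1 : i + 1 - (a + 1) = i - a := by omega
    have h3 : i - a = (i - (a + 1)) + 1 := by omega
    rw [h1, h3, pow_succ]
    push_cast; ring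

lemma aeval_X_sub_C_divGeomSeq_zero (α : k) :
    (aeval (shiftOp k) (X - C α)) (divGeomSeq α 0) = 0 := by
  rw [aeval_X_sub_C_apply]
  funext i
  simp [divGeomSeq, pow_succ, mul_comm]

lemma shift_down (α : k) (a m : ℕ) (h : m ≤ a) :
    (aeval (shiftOp k) ((X - C α) ^ m)) (divGeomSeq α a) = divGeomSeq α (a - m) := by
  induction m generalizing a with
  | zero => simp
  | succ m ih =>
    rw [pow_succ, map_mul, Module.End.mul_apply]
    obtain ⟨b, rfl⟩ : ∃ b, a = b + 1 := ⟨a - 1, by omega⟩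
    rw [show b + 1 - (m + 1) = b - m from by omega, aeval_X_sub_C_divGeomSeq_succ, ih b (by omega)]

lemma aeval_kill (α : k) (a m : ℕ) (h : a < m) :
    (aeval (shiftOp k) ((X - C α) ^ m)) (divGeomSeq α a) = 0 := by
  obtain ⟨r, rfl⟩ : ∃ r, m = (r + 1) + a := ⟨m - 1 - a, by omega⟩
  rw [pow_add, map_mul, Module.End.mul_apply, shift_down α a a le_rfl, Nat.sub_self,
    pow_succ, map_mul, Module.End.mul_apply, aeval_X_sub_C_divGeomSeq_zero, map_zero]

lemma aeval_eigen (α : k) (q : k[X]) :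
    (aeval (shiftOp k) q) (divGeomSeq α 0) = q.eval α • divGeomSeq α 0 := by
  have hpow : ∀ m : ℕ, (shiftOp k ^ m) (divGeomSeq α 0) = α ^ m • divGeomSeq α 0 := by
    intro m
    funext i
    rw [shiftOp_pow_apply]
    simp [divGeomSeq, pow_add, mul_comm]
  rw [Polynomial.aeval_eq_sum_range, Polynomial.eval_eq_sum_range, Finset.sum_smul,
    LinearMap.sum_apply]
  simp only [LinearMap.smul_apply, hpow, smul_smul]

lemma mem_ker_aeval {K : ℕ} (α : Fin K → k) (μ : Fin K → ℕ) (p : k[X])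
    (hp : p = ∏ u, (X - C (α u)) ^ μ u) (ua : Σ u : Fin K, Fin (μ u)) :
    divGeomSeq (α ua.1) (ua.2 : ℕ) ∈ LinearMap.ker (aeval (shiftOp k) p) := by
  obtain ⟨u, a⟩ := ua
  rw [LinearMap.mem_ker]
  obtain ⟨R, hR⟩ : (X - C (α u)) ^ μ u ∣ p :=
    hp ▸ Finset.dvd_prod_of_mem _ (Finset.mem_univ u)
  rw [hR, mul_comm, map_mul, Module.End.mul_apply, aeval_kill _ _ _ a.isLt, map_zero]

end Aux

lemma indep_divGeomSeq {k : Type*} [CommRing k] [IsDomain k] (K : ℕ) (α : Fin K → k)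
    (μ : Fin K → ℕ) (hα : Function.Injective α) :
    LinearIndependent k
      (fun ua : Σ u : Fin K, Fin (μ u) => divGeomSeq (α ua.1) (ua.2 : ℕ)) := by
  rw [Fintype.linearIndependent_iff]
  intro g hg
  have key : ∀ (u0 : Fin K) (a0 : Fin (μ u0)),
      (∀ a : Fin (μ u0), (a0 : ℕ) < (a : ℕ) → g ⟨u0, a⟩ = 0) → g ⟨u0, a0⟩ = 0 := by
    intro u0 a0 htop
    set P : k[X] := ∏ v ∈ Finset.univ.erase u0, (X - C (α v)) ^ μ v with hP
    set Q : k[X] := P * (X - C (α u0)) ^ (a0 : ℕ) with hQ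
    have h2 : ∑ ua : (Σ u : Fin K, Fin (μ u)),
        g ua • (aeval (shiftOp k) Q) (divGeomSeq (α ua.1) (ua.2 : ℕ)) = 0 := by
      have h := congrArg (fun s => (aeval (shiftOp k) Q) s) hg
      simpa [map_sum, map_smul] using h
    rw [Finset.sum_eq_single (⟨u0, a0⟩ : Σ u : Fin K, Fin (μ u))] at h2
    · rw [hQ, map_mul, Module.End.mul_apply, shift_down _ _ _ le_rfl, Nat.sub_self,
        aeval_eigen] at h2
      have hD : P.eval (α u0) ≠ 0 := by
        rw [hP, Polynomial.eval_prod, Finset.prod_ne_zero_iff]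
        intro v hv
        simp only [Polynomial.eval_pow, Polynomial.eval_sub, Polynomial.eval_X,
          Polynomial.eval_C]
        exact pow_ne_zero _ (sub_ne_zero.2 fun h => (Finset.mem_erase.1 hv).1 (hα h).symm)
      have h3 := congrFun h2 0
      simp only [Pi.smul_apply, smul_eq_mul, Pi.zero_apply, divGeomSeq, Nat.choose_self,
        Nat.cast_one, Nat.sub_self, pow_zero, one_mul, mul_one] at h3
      exact (mul_eq_zero.1 h3).resolve_right hD
    · rintro ⟨v, a⟩ - hb
      by_cases hv : v = u0
      · subst hv
        have ha : (a : ℕ) ≠ (a0 : ℕ) := by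
          intro h
          exact hb (by rw [Fin.ext h])
        rcases Nat.lt_or_ge (a : ℕ) (a0 : ℕ) with h | h
        · rw [hQ, map_mul, Module.End.mul_apply, aeval_kill _ _ _ h, map_zero, smul_zero]
        · rw [htop a (lt_of_le_of_ne h (Ne.symm ha)), zero_smul]
      · obtain ⟨R, hR⟩ : (X - C (α v)) ^ μ v ∣ Q :=
          Dvd.dvd.mul_right
            (Finset.dvd_prod_of_mem _ (Finset.mem_erase.2 ⟨hv, Finset.mem_univ v⟩)) _
        rw [hR, mul_comm, map_mul, Module.End.mul_apply, aeval_kill _ _ _ a.isLt, map_zero,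
          smul_zero]
    · intro h
      exact absurd (Finset.mem_univ _) h
  have main : ∀ d : ℕ, ∀ (u0 : Fin K) (a0 : Fin (μ u0)), μ u0 ≤ (a0 : ℕ) + 1 + d →
      g ⟨u0, a0⟩ = 0 := by
    intro d
    induction d with
    | zero => exact fun u0 a0 h => key u0 a0 (fun a ha => absurd a.isLt (by omega))
    | succ d ih => exact fun u0 a0 h => key u0 a0 (fun a ha => ih u0 a (by omega))
  rintro ⟨u0, a0⟩
  exact main (μ u0) u0 a0 (by omega)

lemma monic_prod_pow {k : Type*} [CommRing k] {K : ℕ} (α : Fin K → k) (μ : Fin K → ℕ) :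
    (∏ u, (X - C (α u)) ^ μ u).Monic :=
  monic_prod_of_monic _ _ fun u _ => (monic_X_sub_C (α u)).pow (μ u)

lemma card_eq_natDegree {k : Type*} [CommRing k] [Nontrivial k] {K : ℕ} (α : Fin K → k)
    (μ : Fin K → ℕ) (p : k[X]) (hp : p = ∏ u, (X - C (α u)) ^ μ u) :
    Fintype.card (Σ u : Fin K, Fin (μ u)) = p.natDegree := by
  rw [hp, Polynomial.natDegree_prod_of_monic _ _ fun u _ => (monic_X_sub_C (α u)).pow (μ u)]
  rw [Fintype.card_sigma]
  simp only [Fintype.card_fin]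
  refine Finset.sum_congr rfl fun i _ => ?_
  rw [(monic_X_sub_C (α i)).natDegree_pow, Polynomial.natDegree_X_sub_C, mul_one]

lemma ker_aeval_eq_solSpace {F : Type*} [CommRing F] (p : F[X]) (hm : p.Monic) :
    LinearMap.ker (aeval (shiftOp F) p)
      = (LinearRecurrence.mk p.natDegree (fun i => -(p.coeff i))).solSpace := by
  ext s
  rw [LinearMap.mem_ker, ← LinearRecurrence.is_sol_iff_mem_solSpace]
  have key : ∀ n, ((aeval (shiftOp F) p) s) n
      = s (n + p.natDegree) + ∑ i ∈ Finset.range p.natDegree, p.coeff i * s (n + i) := by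
    intro n
    rw [aeval_shiftOp_apply, Finset.sum_range_succ, hm.coeff_natDegree, one_mul, add_comm]
  constructor
  · intro h n
    have h0 := congrFun h n
    rw [key, Pi.zero_apply] at h0
    rw [Fin.sum_univ_eq_sum_range (fun i => -(p.coeff i) * s (n + i))]
    simp only [neg_mul, Finset.sum_neg_distrib]
    linear_combination h0
  · intro h
    funext n
    rw [key, Pi.zero_apply]
    have h0 : s (n + p.natDegree) = ∑ i : Fin p.natDegree, -(p.coeff i) * s (n + i) := h n
    rw [Fin.sum_univ_eq_sum_range (fun i => -(p.coeff i) * s (n + i))] at h0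
    simp only [neg_mul, Finset.sum_neg_distrib] at h0
    linear_combination h0

lemma span_eq_ker_of_field {F : Type*} [Field F] (K : ℕ) (α : Fin K → F) (μ : Fin K → ℕ)
    (hα : Function.Injective α) (p : F[X])
    (hp : p = ∏ u, (X - C (α u)) ^ μ u) :
    Submodule.span F (Set.range (fun ua : Σ u : Fin K, Fin (μ u) =>
        divGeomSeq (α ua.1) (ua.2 : ℕ)))
      = LinearMap.ker (aeval (shiftOp F) p) := by
  have hm : p.Monic := hp ▸ monic_prod_pow α μ
  have hdeg := card_eq_natDegree α μ p hp
  set Nk := LinearMap.ker (aeval (shiftOp F) p) with hNk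
  have hmem : ∀ ua : Σ u : Fin K, Fin (μ u),
      divGeomSeq (α ua.1) (ua.2 : ℕ) ∈ Nk := mem_ker_aeval α μ p hp
  let e : Nk ≃ₗ[F] (Fin p.natDegree → F) :=
    (LinearEquiv.ofEq _ _ (by rw [hNk, ker_aeval_eq_solSpace p hm])).trans
      (LinearRecurrence.mk p.natDegree (fun i => -(p.coeff i))).toInit
  haveI : FiniteDimensional F Nk := Module.Finite.equiv e.symm
  have hrank : Module.finrank F Nk = p.natDegree := by
    rw [e.finrank_eq, Module.finrank_fin_fun]
  let v : (Σ u : Fin K, Fin (μ u)) → Nk := fun ua => ⟨divGeomSeq (α ua.1) (ua.2 : ℕ), hmem ua⟩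
  have hvind : LinearIndependent F v := by
    have := indep_divGeomSeq K α μ hα
    exact (LinearIndependent.of_comp Nk.subtype (by exact this))
  have hspan : Submodule.span F (Set.range v) = ⊤ :=
    hvind.span_eq_top_of_card_eq_finrank' (by rw [hdeg, hrank])
  have himg : Submodule.map Nk.subtype (Submodule.span F (Set.range v))
      = Submodule.span F (Set.range (fun ua : Σ u : Fin K, Fin (μ u) =>
          divGeomSeq (α ua.1) (ua.2 : ℕ))) := by
    rw [Submodule.map_span]
    congr 1
    rw [← Set.range_comp]
    rfl
  apply le_antisymm
  · rw [Submodule.span_le]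
    rintro _ ⟨ua, rfl⟩
    exact hmem ua
  · intro x hx
    rw [← himg, hspan]
    exact ⟨⟨x, hx⟩, Submodule.mem_top, rfl⟩


/-- For a monic polynomial `p = ∏ (x−α_u)^{μ_u}` with all roots in `k`, the
sequences `s(α_u, a)`, `0 ≤ a ≤ μ_u−1`, are linearly independent, lie in
`ker p(L)`, span a free submodule `S` of rank `deg p`, the quotient
`(ker p(L))/S` is torsion, and `S = ker p(L)` when `k` is a field. -/
theorem stmt_19 (k : Type*) [CommRing k] [IsDomain k] (K : ℕ) (α : Fin K → k)
    (μ : Fin K → ℕ) (hμ : ∀ u, 1 ≤ μ u) (hα : Function.Injective α)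
    (p : Polynomial k)
    (hp : p = ∏ u, (Polynomial.X - Polynomial.C (α u)) ^ μ u) :
    LinearIndependent k
        (fun ua : Σ u : Fin K, Fin (μ u) => divGeomSeq (α ua.1) (ua.2 : ℕ)) ∧
    (∀ ua : Σ u : Fin K, Fin (μ u),
        divGeomSeq (α ua.1) (ua.2 : ℕ)
          ∈ LinearMap.ker (Polynomial.aeval (shiftOp k) p)) ∧
    Fintype.card (Σ u : Fin K, Fin (μ u)) = p.natDegree ∧
    (∀ s ∈ LinearMap.ker (Polynomial.aeval (shiftOp k) p), ∃ x : k, x ≠ 0 ∧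
        x • s ∈ Submodule.span k
          (Set.range (fun ua : Σ u : Fin K, Fin (μ u) =>
            divGeomSeq (α ua.1) (ua.2 : ℕ)))) ∧
    (IsField k →
      Submodule.span k
          (Set.range (fun ua : Σ u : Fin K, Fin (μ u) =>
            divGeomSeq (α ua.1) (ua.2 : ℕ)))
        = LinearMap.ker (Polynomial.aeval (shiftOp k) p)) := by
  refine ⟨indep_divGeomSeq K α μ hα, mem_ker_aeval α μ p hp, card_eq_natDegree α μ p hp, ?_, ?_⟩
  · intro s hs
    classical
    set F := FractionRing k with hF
    set f := algebraMap k F with hf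
    have hfinj : Function.Injective f := IsFractionRing.injective k F
    have hαF : Function.Injective (fun u => f (α u)) := fun a b h => hα (hfinj h)
    have hpF : p.map f = ∏ u, (X - C (f (α u))) ^ μ u := by
      rw [hp, Polynomial.map_prod]
      simp [Polynomial.map_pow]
    have hm : p.Monic := hp ▸ monic_prod_pow α μ
    have hgdiv : ∀ (β : k) (a : ℕ) (n : ℕ),
        f (divGeomSeq β a n) = divGeomSeq (f β) a n := by
      intro β a n
      simp [divGeomSeq, map_mul, map_pow]
    have hgs : (fun i => f (s i)) ∈ LinearMap.ker (aeval (shiftOp F) (p.map f)) := by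
      rw [LinearMap.mem_ker]
      funext n
      rw [aeval_shiftOp_apply, Pi.zero_apply, hm.natDegree_map]
      have heq : ∀ i ∈ Finset.range (p.natDegree + 1),
          (p.map f).coeff i * f (s (n + i)) = f (p.coeff i * s (n + i)) := by
        intro i _
        rw [Polynomial.coeff_map, map_mul]
      rw [Finset.sum_congr rfl heq, ← map_sum, ← aeval_shiftOp_apply,
        LinearMap.mem_ker.1 hs, Pi.zero_apply, map_zero]
    rw [← span_eq_ker_of_field K (fun u => f (α u)) μ hαF (p.map f) hpF,
      Submodule.mem_span_range_iff_exists_fun] at hgs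
    obtain ⟨c, hc⟩ := hgs
    obtain ⟨b, hb⟩ := IsLocalization.exist_integer_multiples (nonZeroDivisors k) Finset.univ c
    have hb' : ∀ i : (Σ u : Fin K, Fin (μ u)), ∃ y : k, f y = (b : k) • c i :=
      fun i => hb i (Finset.mem_univ i)
    choose d hd using hb'
    refine ⟨(b : k), nonZeroDivisors.coe_ne_zero b, ?_⟩
    rw [Submodule.mem_span_range_iff_exists_fun]
    refine ⟨d, ?_⟩
    have hinj : Function.Injective (fun (t : ℕ → k) => (fun i => f (t i)) : (ℕ → k) → ℕ → F) :=
      fun a b' h => funext fun i => hfinj (congrFun h i)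
    apply hinj
    funext n
    have hcn := congrFun hc n
    simp only [Finset.sum_apply, Pi.smul_apply, smul_eq_mul] at hcn ⊢
    rw [map_sum]
    simp only [map_mul, hgdiv, hd]
    simp only [Algebra.smul_def, ← hf]
    simp only [mul_assoc, ← Finset.mul_sum, hcn]
  · intro hk
    letI : Field k := hk.toField
    exact span_eq_ker_of_field K α μ hα p hp
end
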